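/- Consider n items where item j has cost c_j(ξ_i) ∈ {0,1} under each of K scenarios, and the selection problem of choosing exactly q items minimizing the maximum scenario cost. Map this to a scheduling instance with n unit-time jobs and due dates d_j(ξ'_i) = n - q if c_j(ξ_i) = 1 and d_j(ξ'_i) = n otherwise. Then there exists a selection X of q items with max_i Σ_{e_j ∈ X} c_j(ξ_i) ≤ C (for some C ≤ q) if and only if there exists a permutation of the jobs in which at most C jobs are late under each due-date scenario, where a unit-time job in position i is late under scenario ξ'_i iff i > d_j(ξ'_i). -/

import Mathlib

lemma stmt18_aux_card (n q : ℕ) (hq : q ≤ n) :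
    (Finset.univ.filter (fun j : Fin n => n - q ≤ (j:ℕ))).card = q := by
  have h : (Finset.univ.filter (fun j : Fin n => n - q ≤ (j:ℕ))).card
      = ((Finset.range n).filter (fun j => n - q ≤ j)).card := by
    refine Finset.card_bij (fun j _ => (j : ℕ)) ?_ ?_ ?_
    · intro a ha
      simp only [Finset.mem_filter, Finset.mem_univ, true_and] at ha
      simp only [Finset.mem_filter, Finset.mem_range]
      exact ⟨a.isLt, ha⟩
    · intro a _ b _ h; exact Fin.val_injective h
    · intro b hb
      simp only [Finset.mem_filter, Finset.mem_range] at hb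
      exact ⟨⟨b, hb.1⟩, Finset.mem_filter.2 ⟨Finset.mem_univ _, hb.2⟩, rfl⟩
  rw [h, Finset.range_eq_Ico, Finset.Ico_filter_le_of_left_le (Nat.zero_le _),
    Nat.card_Ico, Nat.sub_sub_self hq]


/-- Cost-preserving reduction from Min-Max 0-1 Selection to
Min-Max `1|p_j=1|∑ U_j` with due-date scenarios: due date `n-q` if the item
cost is 1, and `n` otherwise. Job `j` in position `σ j` (0-indexed) completes
at time `σ j + 1` and is late iff its completion time exceeds its due date. -/
theorem stmt18 (n K q C : ℕ) (hq : q ≤ n) (hC : C ≤ q)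
    (c : Fin K → Fin n → ℕ) (hc : ∀ i j, c i j ≤ 1) :
    (∃ X : Finset (Fin n), X.card = q ∧ ∀ i, (∑ j ∈ X, c i j) ≤ C) ↔
    (∃ σ : Equiv.Perm (Fin n), ∀ i,
      (Finset.univ.filter (fun j =>
        (if c i j = 1 then n - q else n) < (σ j : ℕ) + 1)).card ≤ C) := by
  classical
  have hsum : ∀ (i : Fin K) (X : Finset (Fin n)),
      (X.filter (fun j => c i j = 1)).card = ∑ j ∈ X, c i j := by
    intro i X
    rw [Finset.card_filter]
    refine Finset.sum_congr rfl fun j _ => ?_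
    have := hc i j
    by_cases h1 : c i j = 1 <;> simp [h1] <;> omega
  constructor
  · rintro ⟨X, hX, hXC⟩
    have hcard1 : Fintype.card {j : Fin n // j ∈ X}
        = Fintype.card {j : Fin n // n - q ≤ (j:ℕ)} := by
      have h1 : Fintype.card {j : Fin n // j ∈ X} = q := by
        rw [show Fintype.card {j : Fin n // j ∈ X} = X.card from Fintype.card_coe X, hX]
      have h2 : Fintype.card {j : Fin n // n - q ≤ (j:ℕ)} = q := by
        rw [Fintype.card_subtype]; exact stmt18_aux_card n q hq
      rw [h1, h2]
    have hcard2 : Fintype.card {j : Fin n // ¬ j ∈ X}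
        = Fintype.card {j : Fin n // ¬ (n - q ≤ (j:ℕ))} := by
      rw [Fintype.card_subtype_compl, Fintype.card_subtype_compl, hcard1]
    let e1 := Fintype.equivOfCardEq hcard1
    let e2 := Fintype.equivOfCardEq hcard2
    refine ⟨((Equiv.sumCompl (· ∈ X)).symm.trans
      ((e1.sumCongr e2).trans (Equiv.sumCompl (fun j : Fin n => n - q ≤ (j:ℕ))))), ?_⟩
    set σ := ((Equiv.sumCompl (· ∈ X)).symm.trans
      ((e1.sumCongr e2).trans (Equiv.sumCompl (fun j : Fin n => n - q ≤ (j:ℕ))))) with hσ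
    have hmem : ∀ j, j ∈ X → n - q ≤ (σ j : ℕ) := by
      intro j hj
      simp only [hσ, Equiv.trans_apply, Equiv.sumCompl_symm_apply_of_pos hj,
        Equiv.sumCongr_apply, Sum.map_inl, Equiv.sumCompl_apply_inl]
      exact (e1 ⟨j, hj⟩).2
    have hnot : ∀ j, j ∉ X → ¬ (n - q ≤ (σ j : ℕ)) := by
      intro j hj
      simp only [hσ, Equiv.trans_apply, Equiv.sumCompl_symm_apply_of_neg hj,
        Equiv.sumCongr_apply, Sum.map_inr, Equiv.sumCompl_apply_inr]
      exact (e2 ⟨j, hj⟩).2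
    intro i
    have hset : Finset.univ.filter (fun j =>
        (if c i j = 1 then n - q else n) < (σ j : ℕ) + 1)
        = X.filter (fun j => c i j = 1) := by
      ext j
      simp only [Finset.mem_filter, Finset.mem_univ, true_and]
      constructor
      · intro h
        by_cases h1 : c i j = 1
        · rw [if_pos h1] at h
          refine ⟨?_, h1⟩
          by_contra hj
          exact hnot j hj (Nat.lt_succ_iff.mp h)
        · rw [if_neg h1] at h
          exact absurd (Nat.lt_succ_iff.mp h) (Nat.not_le.2 (σ j).isLt)
      · rintro ⟨hjX, h1⟩
        rw [if_pos h1]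
        exact Nat.lt_succ_iff.mpr (hmem j hjX)
    rw [hset, hsum i X]
    exact hXC i
  · rintro ⟨σ, hσ⟩
    refine ⟨Finset.univ.filter (fun j => n - q ≤ (σ j : ℕ)), ?_, ?_⟩
    · have key : (Finset.univ.filter (fun j => n - q ≤ (σ j : ℕ))).card
          = (Finset.univ.filter (fun j : Fin n => n - q ≤ (j:ℕ))).card := by
        refine Finset.card_bij (fun j _ => σ j) ?_ ?_ ?_
        · intro a ha
          simp only [Finset.mem_filter, Finset.mem_univ, true_and] at ha ⊢
          exact ha
        · intro a _ b _ h; exact σ.injective h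
        · intro b hb
          simp only [Finset.mem_filter, Finset.mem_univ, true_and] at hb
          exact ⟨σ.symm b, Finset.mem_filter.2 ⟨Finset.mem_univ _, by simpa using hb⟩, by simp⟩
      rw [key]; exact stmt18_aux_card n q hq
    · intro i
      rw [← hsum i]
      have hset : (Finset.univ.filter (fun j => n - q ≤ (σ j : ℕ))).filter
          (fun j => c i j = 1)
          = Finset.univ.filter (fun j =>
            (if c i j = 1 then n - q else n) < (σ j : ℕ) + 1) := by
        ext j
        simp only [Finset.mem_filter, Finset.mem_univ, true_and]
        constructor
        · rintro ⟨hle, h1⟩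
          rw [if_pos h1]
          exact Nat.lt_succ_iff.mpr hle
        · intro h
          by_cases h1 : c i j = 1
          · rw [if_pos h1] at h
            exact ⟨Nat.lt_succ_iff.mp h, h1⟩
          · rw [if_neg h1] at h
            exact absurd (Nat.lt_succ_iff.mp h) (Nat.not_le.2 (σ j).isLt)
      rw [hset]
      exact hσ i
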